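/- arXiv:2403.06920 — 2 statements merged into one kernel-verified Lean document; each statement's English description precedes it below -/
import Mathlib

section
/- Under the stated setting, suppose in addition that ∑_{k=0}^∞ max_{i,j∈{1,…,N}} |α_i(k) − α_j(k)| < ∞ (condition (c')). Then the multi-agent system achieves almost sure consensus (Corollary 3): there exists a random variable x* : Ω → ℝ such that for every i ∈ {1,…,N}, x_i(k) → x* almost surely as k → ∞. -/
open MeasureTheory Filter Matrix
open scoped ENNReal NNReal
set_option maxHeartbeats 1000000
namespace ConsensusAux


variable {N : ℕ}

/-- Euclidean norm on `Fin N → ℝ`. -/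
noncomputable def nr (v : Fin N → ℝ) : ℝ := Real.sqrt (∑ i, v i ^ 2)

lemma sumsq_nonneg (v : Fin N → ℝ) : 0 ≤ ∑ i, v i ^ 2 :=
  Finset.sum_nonneg fun _ _ => sq_nonneg _

lemma nr_nonneg (v : Fin N → ℝ) : 0 ≤ nr v := Real.sqrt_nonneg _

lemma nr_sq (v : Fin N → ℝ) : nr v ^ 2 = ∑ i, v i ^ 2 :=
  Real.sq_sqrt (sumsq_nonneg v)

lemma nr_le_of_sq_le {v : Fin N → ℝ} {c : ℝ} (hc : 0 ≤ c)
    (h : ∑ i, v i ^ 2 ≤ c ^ 2) : nr v ≤ c := by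
  rw [nr, show c = Real.sqrt (c ^ 2) by rw [Real.sqrt_sq hc]]
  exact Real.sqrt_le_sqrt h

lemma dot_le (f g : Fin N → ℝ) : ∑ i, f i * g i ≤ nr f * nr g := by
  have h := Finset.sum_mul_sq_le_sq_mul_sq Finset.univ f g
  refine (le_abs_self _).trans ?_
  have : |∑ i, f i * g i| = Real.sqrt ((∑ i, f i * g i) ^ 2) := by
    rw [Real.sqrt_sq_eq_abs]
  rw [this, nr, nr, ← Real.sqrt_mul (sumsq_nonneg f)]
  exact Real.sqrt_le_sqrt h

lemma sumsq_add (f g : Fin N → ℝ) :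
    ∑ i, (f i + g i) ^ 2 = (∑ i, f i ^ 2) + 2 * (∑ i, f i * g i) + ∑ i, g i ^ 2 := by
  have h : ∀ i : Fin N, (f i + g i) ^ 2 = f i ^ 2 + 2 * (f i * g i) + g i ^ 2 :=
    fun i => by ring
  simp only [h, Finset.sum_add_distrib, ← Finset.mul_sum]

lemma nr_add (f g : Fin N → ℝ) : nr (f + g) ≤ nr f + nr g := by
  refine nr_le_of_sq_le (add_nonneg (nr_nonneg f) (nr_nonneg g)) ?_
  have h1 : ∑ i, (f + g) i ^ 2
      = (∑ i, f i ^ 2) + 2 * (∑ i, f i * g i) + ∑ i, g i ^ 2 := by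
    simpa using sumsq_add f g
  have h2 := dot_le f g
  have h3 := nr_sq f; have h4 := nr_sq g
  nlinarith [nr_nonneg f, nr_nonneg g]

lemma nr_add3 (f g h : Fin N → ℝ) : nr (f + g + h) ≤ nr f + nr g + nr h :=
  (nr_add (f + g) h).trans (by linarith [nr_add f g])

lemma coord_abs_le (f : Fin N → ℝ) (i : Fin N) : |f i| ≤ nr f := by
  rw [nr, show |f i| = Real.sqrt (f i ^ 2) by rw [Real.sqrt_sq_eq_abs]]
  exact Real.sqrt_le_sqrt (Finset.single_le_sum (fun j _ => sq_nonneg (f j))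
    (Finset.mem_univ i))

lemma nr_le_sum_abs (f : Fin N → ℝ) : nr f ≤ ∑ i, |f i| := by
  refine nr_le_of_sq_le (Finset.sum_nonneg fun _ _ => abs_nonneg _) ?_
  calc ∑ i, f i ^ 2 = ∑ i, |f i| * |f i| := by
        refine Finset.sum_congr rfl fun i _ => ?_
        rw [sq, ← abs_mul_abs_self (f i)]
    _ ≤ ∑ i, (∑ j, |f j|) * |f i| := by
        refine Finset.sum_le_sum fun i _ => ?_
        exact mul_le_mul_of_nonneg_right (Finset.single_le_sum
          (fun j _ => abs_nonneg (f j)) (Finset.mem_univ i)) (abs_nonneg _)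
    _ = (∑ i, |f i|) ^ 2 := by rw [← Finset.mul_sum]; ring

/-- pointwise domination gives norm bound -/
lemma nr_le_nr_of_abs_le {f g : Fin N → ℝ} (h : ∀ i, |f i| ≤ |g i|) : nr f ≤ nr g := by
  rw [nr, nr]
  refine Real.sqrt_le_sqrt (Finset.sum_le_sum fun i _ => ?_)
  rw [← sq_abs (f i), ← sq_abs (g i)]
  exact pow_le_pow_left₀ (abs_nonneg _) (h i) 2



/-- Frobenius norm bound constant. -/
noncomputable def CL (L : Matrix (Fin N) (Fin N) ℝ) : ℝ := Real.sqrt (∑ i, ∑ j, L i j ^ 2)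

lemma CL_nonneg (L : Matrix (Fin N) (Fin N) ℝ) : 0 ≤ CL L := Real.sqrt_nonneg _

lemma CL_sq (L : Matrix (Fin N) (Fin N) ℝ) : CL L ^ 2 = ∑ i, ∑ j, L i j ^ 2 :=
  Real.sq_sqrt (Finset.sum_nonneg fun _ _ => Finset.sum_nonneg fun _ _ => sq_nonneg _)

lemma mulVec_apply' (L : Matrix (Fin N) (Fin N) ℝ) (v : Fin N → ℝ) (i : Fin N) :
    L.mulVec v i = ∑ j, L i j * v j := by
  simp [Matrix.mulVec, dotProduct]

lemma sumsq_mulVec_le (L : Matrix (Fin N) (Fin N) ℝ) (v : Fin N → ℝ) :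
    ∑ i, (L.mulVec v i) ^ 2 ≤ CL L ^ 2 * ∑ j, v j ^ 2 := by
  rw [CL_sq, Finset.sum_mul]
  refine Finset.sum_le_sum fun i _ => ?_
  rw [mulVec_apply']
  exact Finset.sum_mul_sq_le_sq_mul_sq Finset.univ (fun j => L i j) v


lemma nr_mulVec_le (L : Matrix (Fin N) (Fin N) ℝ) (v : Fin N → ℝ) :
    nr (L.mulVec v) ≤ CL L * nr v := by
  refine nr_le_of_sq_le (mul_nonneg (CL_nonneg L) (Real.sqrt_nonneg _)) ?_
  rw [mul_pow]
  have : nr v ^ 2 = ∑ j, v j ^ 2 := Real.sq_sqrt (Finset.sum_nonneg fun _ _ => sq_nonneg _)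
  rw [this]
  exact sumsq_mulVec_le L v

section LFacts
variable {L : Matrix (Fin N) (Fin N) ℝ}

lemma col_sum_zero (hLsymm : L.IsSymm) (hL1 : L.mulVec (fun _ => (1 : ℝ)) = 0)
    (j : Fin N) : ∑ i, L i j = 0 := by
  have h1 : ∑ i, L j i = 0 := by
    have := congrFun hL1 j
    simpa [mulVec_apply'] using this
  rw [← h1]
  exact Finset.sum_congr rfl fun i _ => hLsymm.apply j i

lemma sum_mulVec_zero (hLsymm : L.IsSymm) (hL1 : L.mulVec (fun _ => (1 : ℝ)) = 0) (v : Fin N → ℝ) : ∑ i, L.mulVec v i = 0 := by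
  simp only [mulVec_apply']
  rw [Finset.sum_comm]
  have : ∀ j, ∑ i, L i j * v j = 0 := fun j => by
    rw [← Finset.sum_mul, col_sum_zero hLsymm hL1 j, zero_mul]
  simp [this]

lemma mulVec_shift (hL1 : L.mulVec (fun _ => (1 : ℝ)) = 0) (v : Fin N → ℝ) (c : ℝ) :
    L.mulVec (fun i => v i + c) = L.mulVec v := by
  have h : (fun i => v i + c) = v + c • (fun _ => (1 : ℝ)) := by
    funext i; simp [mul_comm]
  rw [h, Matrix.mulVec_add, Matrix.mulVec_smul, hL1]
  simp

end LFacts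

/-- One-step contraction estimate. -/
lemma contraction {L : Matrix (Fin N) (Fin N) ℝ} {lam : ℝ} (hlam : 0 < lam)
    (hgap : ∀ v : Fin N → ℝ, (∑ i, v i) = 0 →
      lam * (∑ i, (v i) ^ 2) ≤ v ⬝ᵥ L.mulVec v)
    {v : Fin N → ℝ} (hv : ∑ i, v i = 0)
    {aa : ℝ} (ha0 : 0 ≤ aa) (ha1 : aa * CL L ^ 2 ≤ lam) (ha2 : aa * lam ≤ 1) :
    nr (fun i => v i - aa * L.mulVec v i) ≤ (1 - lam * aa / 2) * nr v := by
  have hQ : (0:ℝ) ≤ ∑ i, v i ^ 2 := Finset.sum_nonneg fun _ _ => sq_nonneg _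
  have hnr : nr v ^ 2 = ∑ i, v i ^ 2 := Real.sq_sqrt hQ
  have hfac : 0 ≤ 1 - lam * aa / 2 := by nlinarith
  refine nr_le_of_sq_le (mul_nonneg hfac (Real.sqrt_nonneg _)) ?_
  have hdot : lam * (∑ i, v i ^ 2) ≤ ∑ i, v i * L.mulVec v i := by
    have := hgap v hv
    simpa [dotProduct] using this
  have hg := sumsq_mulVec_le L v
  have hexp : ∑ i, (v i - aa * L.mulVec v i) ^ 2
      = (∑ i, v i ^ 2) - 2 * aa * (∑ i, v i * L.mulVec v i)
        + aa ^ 2 * ∑ i, (L.mulVec v i) ^ 2 := by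
    have h : ∀ i : Fin N, (v i - aa * L.mulVec v i) ^ 2
        = v i ^ 2 - 2 * aa * (v i * L.mulVec v i) + aa ^ 2 * (L.mulVec v i) ^ 2 :=
      fun i => by ring
    simp only [h, Finset.sum_add_distrib, Finset.sum_sub_distrib, ← Finset.mul_sum]
  rw [hexp, mul_pow, hnr]
  have h1 : aa * (lam * ∑ i, v i ^ 2) ≤ aa * ∑ i, v i * L.mulVec v i :=
    mul_le_mul_of_nonneg_left hdot ha0
  have h2 : aa ^ 2 * (∑ i, (L.mulVec v i) ^ 2) ≤ aa ^ 2 * (CL L ^ 2 * ∑ j, v j ^ 2) :=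
    mul_le_mul_of_nonneg_left hg (sq_nonneg aa)
  have h3 : (aa * CL L ^ 2) * (aa * ∑ i, v i ^ 2) ≤ lam * (aa * ∑ i, v i ^ 2) :=
    mul_le_mul_of_nonneg_right ha1 (mul_nonneg ha0 hQ)
  nlinarith [mul_nonneg (mul_nonneg (mul_nonneg hlam.le ha0) (mul_nonneg hlam.le ha0)) hQ]


/-- products of (1 - β) over `Ico a b` -/
noncomputable def PP (β : ℕ → ℝ) (a b : ℕ) : ℝ := ∏ j ∈ Finset.Ico a b, (1 - β j)
/-- products of (1 - β + ε) over `Ico a b` -/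
noncomputable def PP2 (β ε : ℕ → ℝ) (a b : ℕ) : ℝ := ∏ j ∈ Finset.Ico a b, (1 - β j + ε j)

section SC
variable {β ε : ℕ → ℝ} {K₀ : ℕ}
  (hβ : ∀ k, K₀ ≤ k → 0 ≤ β k ∧ β k ≤ 1/2) (hε0 : ∀ k, 0 ≤ ε k)

include hβ in
lemma PP_nonneg {a b : ℕ} (ha : K₀ ≤ a) : 0 ≤ PP β a b :=
  Finset.prod_nonneg fun j hj => by
    have := hβ j (ha.trans (Finset.mem_Ico.mp hj).1)
    linarith [this.2]

include hβ in
lemma PP_le_one {a b : ℕ} (ha : K₀ ≤ a) : PP β a b ≤ 1 :=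
  Finset.prod_le_one (fun j hj => by
      have := hβ j (ha.trans (Finset.mem_Ico.mp hj).1); linarith [this.2])
    (fun j hj => by
      have := hβ j (ha.trans (Finset.mem_Ico.mp hj).1); linarith [this.1])

include hβ hε0 in
lemma PP2_nonneg {a b : ℕ} (ha : K₀ ≤ a) : 0 ≤ PP2 β ε a b :=
  Finset.prod_nonneg fun j hj => by
    have h1 := hβ j (ha.trans (Finset.mem_Ico.mp hj).1)
    have h2 := hε0 j; linarith [h1.2]

include hβ hε0 in
lemma PP2_le (hεs : Summable ε) {a b : ℕ} (ha : K₀ ≤ a) :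
    PP2 β ε a b ≤ Real.exp (2 * ∑' k, ε k) * PP β a b := by
  have key : ∀ j ∈ Finset.Ico a b, (1 - β j + ε j) ≤ (1 - β j) * Real.exp (2 * ε j) := by
    intro j hj
    have h1 := hβ j (ha.trans (Finset.mem_Ico.mp hj).1)
    have h2 := hε0 j
    have h3 : 1 + 2 * ε j ≤ Real.exp (2 * ε j) := by
      have := Real.add_one_le_exp (2 * ε j); linarith
    have h4 : (0:ℝ) < Real.exp (2 * ε j) := Real.exp_pos _
    nlinarith [h1.1, h1.2]
  calc PP2 β ε a b ≤ ∏ j ∈ Finset.Ico a b, ((1 - β j) * Real.exp (2 * ε j)) := by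
        refine Finset.prod_le_prod (fun j hj => ?_) key
        have h1 := hβ j (ha.trans (Finset.mem_Ico.mp hj).1)
        have h2 := hε0 j; linarith [h1.2]
    _ = (∏ j ∈ Finset.Ico a b, Real.exp (2 * ε j)) * PP β a b := by
        rw [Finset.prod_mul_distrib, mul_comm]; rfl
    _ ≤ Real.exp (2 * ∑' k, ε k) * PP β a b := by
        refine mul_le_mul_of_nonneg_right ?_ (PP_nonneg hβ ha)
        rw [← Real.exp_sum]
        refine Real.exp_le_exp.mpr ?_
        rw [← Finset.mul_sum]
        refine mul_le_mul_of_nonneg_left ?_ (by norm_num)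
        exact Summable.sum_le_tsum _ (fun j _ => hε0 j) hεs

include hβ in
lemma PP_telescope {a : ℕ} (ha : K₀ ≤ a) :
    ∀ b, a ≤ b → ∑ k ∈ Finset.Ico a b, PP β (k+1) b * β k = 1 - PP β a b := by
  intro b hb
  induction b, hb using Nat.le_induction with
  | base => simp [PP]
  | succ b hb ih =>
    rw [Finset.sum_Ico_succ_top hb]
    have hPPtop : ∀ c : ℕ, c ≤ b → PP β c (b+1) = PP β c b * (1 - β b) := by
      intro c hc
      rw [PP, PP, Finset.prod_Ico_succ_top hc]
    have hsum : ∑ k ∈ Finset.Ico a b, PP β (k+1) (b+1) * β k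
        = (1 - β b) * ∑ k ∈ Finset.Ico a b, PP β (k+1) b * β k := by
      rw [Finset.mul_sum]
      refine Finset.sum_congr rfl fun k hk => ?_
      have hk' := (Finset.mem_Ico.mp hk).2
      rw [hPPtop (k+1) hk']; ring
    rw [hsum, ih, hPPtop a hb]
    have : PP β (b+1) (b+1) = 1 := by simp [PP]
    rw [this]; ring

include hβ in
lemma PP_tendsto_zero {a : ℕ} (ha : K₀ ≤ a)
    (hβdiv : Tendsto (fun n => ∑ k ∈ Finset.range n, β k) atTop atTop) :
    Tendsto (fun b => PP β a b) atTop (nhds 0) := by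
  have hbound : ∀ᶠ b in atTop, PP β a b ≤ Real.exp (-(∑ k ∈ Finset.range b, β k
      - ∑ k ∈ Finset.range a, β k)) := by
    filter_upwards [eventually_ge_atTop a] with b hb
    have h1 : PP β a b ≤ ∏ j ∈ Finset.Ico a b, Real.exp (-β j) := by
      refine Finset.prod_le_prod (fun j hj => ?_) (fun j hj => ?_)
      · have := hβ j (ha.trans (Finset.mem_Ico.mp hj).1); linarith [this.2]
      · have := Real.add_one_le_exp (-β j); linarith
    rw [← Real.exp_sum, ← Finset.sum_Ico_eq_sub _ hb] at *
    simpa using h1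
  have hlim : Tendsto (fun b => Real.exp (-(∑ k ∈ Finset.range b, β k
      - ∑ k ∈ Finset.range a, β k))) atTop (nhds 0) := by
    refine Real.tendsto_exp_atBot.comp ?_
    exact tendsto_neg_atBot_iff.mpr (tendsto_atTop_add_const_right _ _ hβdiv)
  refine squeeze_zero' ?_ hbound hlim
  filter_upwards [] with b
  exact PP_nonneg hβ ha

end SC

/-- Core scalar convergence lemma. -/
lemma seq_tendsto_zero {Y β ε τ : ℕ → ℝ} {C : ℝ} {K₀ : ℕ} (hC : 0 ≤ C)
    (hY : ∀ k, 0 ≤ Y k) (hτ0 : ∀ k, 0 ≤ τ k) (hε0 : ∀ k, 0 ≤ ε k)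
    (hβ : ∀ k, K₀ ≤ k → 0 ≤ β k ∧ β k ≤ 1/2)
    (hrec : ∀ k, K₀ ≤ k → Y (k+1) ≤ (1 - β k + ε k) * Y k + C * (β k + ε k) * τ k)
    (hεs : Summable ε) (hτ : Tendsto τ atTop (nhds 0))
    (hβdiv : Tendsto (fun n => ∑ k ∈ Finset.range n, β k) atTop atTop) :
    Tendsto Y atTop (nhds 0) := by
  set CE := Real.exp (2 * ∑' k, ε k) with hCE
  have hCE1 : 1 ≤ CE := by
    rw [hCE, ← Real.exp_zero]
    exact Real.exp_le_exp.mpr (by have := (tsum_nonneg hε0 : 0 ≤ ∑' k, ε k); positivity)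
  have hSε : 0 ≤ ∑' k, ε k := tsum_nonneg hε0
  -- main unrolled bound
  have main : ∀ n, K₀ ≤ n → ∀ θ : ℝ, 0 ≤ θ → (∀ k, n ≤ k → τ k ≤ θ) →
      ∀ m, n ≤ m → Y m ≤ CE * PP β n m * Y n + C * θ * CE * (1 + ∑' k, ε k) := by
    intro n hn θ hθ hτθ
    have claim : ∀ m, n ≤ m → Y m ≤ PP2 β ε n m * Y n
        + C * θ * ∑ k ∈ Finset.Ico n m, PP2 β ε (k+1) m * (β k + ε k) := by
      intro m hm
      induction m, hm using Nat.le_induction with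
      | base => simp [PP2]
      | succ m hm ih =>
        have hmK : K₀ ≤ m := hn.trans hm
        have hfac0 : 0 ≤ 1 - β m + ε m := by
          have := hβ m hmK; have := hε0 m; linarith [(hβ m hmK).2]
        have step := hrec m hmK
        have h2 : C * (β m + ε m) * τ m ≤ C * θ * (β m + ε m) := by
          have hb0 : 0 ≤ β m + ε m := by linarith [(hβ m hmK).1, hε0 m]
          have := hτθ m hm
          calc C * (β m + ε m) * τ m ≤ C * (β m + ε m) * θ := by
                refine mul_le_mul_of_nonneg_left this (mul_nonneg hC hb0)
            _ = C * θ * (β m + ε m) := by ring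
        have hPPtop : ∀ c : ℕ, c ≤ m → PP2 β ε c (m+1) = PP2 β ε c m * (1 - β m + ε m) := by
          intro c hc; rw [PP2, PP2, Finset.prod_Ico_succ_top hc]
        have hmul := mul_le_mul_of_nonneg_left ih hfac0
        have hsum : (1 - β m + ε m) * ∑ k ∈ Finset.Ico n m, PP2 β ε (k+1) m * (β k + ε k)
            = ∑ k ∈ Finset.Ico n m, PP2 β ε (k+1) (m+1) * (β k + ε k) := by
          rw [Finset.mul_sum]
          refine Finset.sum_congr rfl fun k hk => ?_
          rw [hPPtop (k+1) (Finset.mem_Ico.mp hk).2]; ring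
        calc Y (m+1) ≤ (1 - β m + ε m) * Y m + C * (β m + ε m) * τ m := step
          _ ≤ (1 - β m + ε m) * (PP2 β ε n m * Y n
              + C * θ * ∑ k ∈ Finset.Ico n m, PP2 β ε (k+1) m * (β k + ε k))
              + C * θ * (β m + ε m) := by linarith
          _ = PP2 β ε n (m+1) * Y n
              + C * θ * (∑ k ∈ Finset.Ico n m, PP2 β ε (k+1) (m+1) * (β k + ε k)
                + PP2 β ε (m+1) (m+1) * (β m + ε m)) := by
              rw [hPPtop n hm]
              have h1 : PP2 β ε (m+1) (m+1) = 1 := by simp [PP2]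
              rw [h1, ← hsum]; ring
          _ = PP2 β ε n (m+1) * Y n
              + C * θ * ∑ k ∈ Finset.Ico n (m+1), PP2 β ε (k+1) (m+1) * (β k + ε k) := by
              rw [Finset.sum_Ico_succ_top hm]
    intro m hm
    have h1 := claim m hm
    have hb1 : PP2 β ε n m * Y n ≤ CE * PP β n m * Y n :=
      mul_le_mul_of_nonneg_right (PP2_le hβ hε0 hεs hn) (hY n)
    have hb2 : ∑ k ∈ Finset.Ico n m, PP2 β ε (k+1) m * (β k + ε k)
        ≤ CE * (1 + ∑' k, ε k) := by
      have hterm : ∀ k ∈ Finset.Ico n m, PP2 β ε (k+1) m * (β k + ε k)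
          ≤ CE * (PP β (k+1) m * β k) + CE * ε k := by
        intro k hk
        have hk1 : K₀ ≤ k + 1 := (hn.trans (Finset.mem_Ico.mp hk).1).trans (Nat.le_succ k)
        have hP2 := PP2_le hβ hε0 hεs (a := k+1) (b := m) hk1
        have hb0 : 0 ≤ β k := (hβ k (hn.trans (Finset.mem_Ico.mp hk).1)).1
        have hPle : PP β (k+1) m ≤ 1 := PP_le_one hβ hk1
        have hP0 : 0 ≤ PP β (k+1) m := PP_nonneg hβ hk1
        have hP20 : 0 ≤ PP2 β ε (k+1) m := PP2_nonneg hβ hε0 hk1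
        have he := hε0 k
        calc PP2 β ε (k+1) m * (β k + ε k) ≤ (CE * PP β (k+1) m) * (β k + ε k) := by
              refine mul_le_mul_of_nonneg_right hP2 (by linarith)
          _ = CE * (PP β (k+1) m * β k) + (CE * PP β (k+1) m) * ε k := by ring
          _ ≤ CE * (PP β (k+1) m * β k) + CE * ε k := by
              have : CE * PP β (k+1) m ≤ CE := by
                nlinarith
              nlinarith
      calc ∑ k ∈ Finset.Ico n m, PP2 β ε (k+1) m * (β k + ε k)
          ≤ ∑ k ∈ Finset.Ico n m, (CE * (PP β (k+1) m * β k) + CE * ε k) :=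
            Finset.sum_le_sum hterm
        _ = CE * ∑ k ∈ Finset.Ico n m, PP β (k+1) m * β k
            + CE * ∑ k ∈ Finset.Ico n m, ε k := by
            rw [Finset.sum_add_distrib, Finset.mul_sum, Finset.mul_sum]
        _ ≤ CE * 1 + CE * ∑' k, ε k := by
            have ht : ∑ k ∈ Finset.Ico n m, PP β (k+1) m * β k ≤ 1 := by
              rcases le_or_gt n m with hnm | hnm
              · rw [PP_telescope hβ hn m hnm]
                linarith [PP_nonneg hβ (a := n) (b := m) hn]
              · rw [Finset.Ico_eq_empty (by omega)]; simp
            have hts : ∑ k ∈ Finset.Ico n m, ε k ≤ ∑' k, ε k :=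
              Summable.sum_le_tsum _ (fun j _ => hε0 j) hεs
            have hCE0 : 0 ≤ CE := by linarith
            nlinarith
        _ = CE * (1 + ∑' k, ε k) := by ring
    have hfin : C * θ * ∑ k ∈ Finset.Ico n m, PP2 β ε (k+1) m * (β k + ε k)
        ≤ C * θ * (CE * (1 + ∑' k, ε k)) :=
      mul_le_mul_of_nonneg_left hb2 (mul_nonneg hC hθ)
    calc Y m ≤ PP2 β ε n m * Y n
        + C * θ * ∑ k ∈ Finset.Ico n m, PP2 β ε (k+1) m * (β k + ε k) := h1
      _ ≤ CE * PP β n m * Y n + C * θ * CE * (1 + ∑' k, ε k) := by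
          refine add_le_add hb1 (hfin.trans (le_of_eq (by ring)))
  -- epsilon argument
  rw [Metric.tendsto_atTop]
  intro δ hδ
  set D := C * CE * (1 + ∑' k, ε k) + 1 with hD
  have hD0 : 0 < D := by
    have : 0 ≤ C * CE * (1 + ∑' k, ε k) := by positivity
    linarith
  set θ := δ / (2 * D) with hθdef
  have hθpos : 0 < θ := by positivity
  obtain ⟨n₁, hn₁⟩ := (Metric.tendsto_atTop.mp hτ) θ hθpos
  set n := max n₁ K₀ with hn
  have hnK : K₀ ≤ n := le_max_right _ _
  have hτθ : ∀ k, n ≤ k → τ k ≤ θ := by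
    intro k hk
    have h := hn₁ k ((le_max_left _ _).trans hk)
    rw [Real.dist_eq, sub_zero] at h
    exact (le_abs_self _).trans h.le
  have hmain := main n hnK θ hθpos.le hτθ
  -- choose m₀ with CE * PP n m * Y n < δ/2 for m ≥ m₀
  have hPP0 := PP_tendsto_zero hβ hnK hβdiv
  have hlim2 : Tendsto (fun m => CE * PP β n m * Y n) atTop (nhds 0) := by
    have := (hPP0.const_mul CE).mul_const (Y n)
    simpa using this
  obtain ⟨m₀, hm₀⟩ := (Metric.tendsto_atTop.mp hlim2) (δ/4) (by linarith)
  refine ⟨max m₀ n, fun m hm => ?_⟩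
  have hm1 : m₀ ≤ m := (le_max_left _ _).trans hm
  have hm2 : n ≤ m := (le_max_right _ _).trans hm
  have h1 := hmain m hm2
  have h2 := hm₀ m hm1
  rw [Real.dist_eq, sub_zero] at h2 ⊢
  have h3 : CE * PP β n m * Y n ≤ δ/4 := (le_abs_self _).trans h2.le
  have h4 : C * θ * CE * (1 + ∑' k, ε k) ≤ δ/2 := by
    have : C * θ * CE * (1 + ∑' k, ε k) = θ * (C * CE * (1 + ∑' k, ε k)) := by ring
    rw [this, hθdef]
    rw [div_mul_eq_mul_div, div_le_iff₀ (by positivity)]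
    have hc0 : 0 ≤ C * CE * (1 + ∑' k, ε k) := by positivity
    nlinarith
  have : Y m ≤ δ/4 + δ/2 := by linarith
  rw [abs_of_nonneg (hY m)]
  linarith



lemma nr_smul (c : ℝ) (v : Fin N → ℝ) : nr (fun i => c * v i) = |c| * nr v := by
  rw [nr, nr]
  have h : ∀ i : Fin N, (c * v i) ^ 2 = c ^ 2 * v i ^ 2 := fun i => by ring
  simp only [h, ← Finset.mul_sum]
  rw [Real.sqrt_mul (sq_nonneg c), Real.sqrt_sq_eq_abs]

lemma nr_neg (v : Fin N → ℝ) : nr (fun i => -(v i)) = nr v := by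
  rw [nr, nr]; simp

/-- sum of the projected vector is zero -/
lemma sum_proj_zero (hN : (0:ℝ) < N) (v : Fin N → ℝ) :
    ∑ i, (v i - (∑ j, v j) / N) = 0 := by
  rw [Finset.sum_sub_distrib, Finset.sum_const, Finset.card_univ, Fintype.card_fin,
    nsmul_eq_mul]
  field_simp
  simp

/-- projection decreases the Euclidean norm -/
lemma nr_proj_le (hN : (0:ℝ) < N) (v : Fin N → ℝ) :
    nr (fun i => v i - (∑ j, v j) / N) ≤ nr v := by
  have hQ : (0:ℝ) ≤ ∑ i, v i ^ 2 := Finset.sum_nonneg fun _ _ => sq_nonneg _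
  refine nr_le_of_sq_le (nr_nonneg v) ?_
  rw [nr_sq]
  have hexp : ∑ i, (v i - (∑ j, v j) / N) ^ 2
      = (∑ i, v i ^ 2) - 2 * ((∑ j, v j) / N) * (∑ i, v i)
        + N * ((∑ j, v j) / N) ^ 2 := by
    have h : ∀ i : Fin N, (v i - (∑ j, v j) / N) ^ 2
        = v i ^ 2 - 2 * ((∑ j, v j) / N) * v i + ((∑ j, v j) / N) ^ 2 := fun i => by ring
    simp only [h, Finset.sum_add_distrib, Finset.sum_sub_distrib, ← Finset.mul_sum,
      Finset.sum_const, Finset.card_univ, Fintype.card_fin, nsmul_eq_mul]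
  rw [hexp]
  have h1 : (N:ℝ) * ((∑ j, v j) / N) ^ 2 = (∑ j, v j) ^ 2 / N := by
    field_simp
  have h2 : 2 * ((∑ j, v j) / N) * (∑ i, v i) = 2 * (∑ j, v j) ^ 2 / N := by
    field_simp
  rw [h1, h2]
  have h3 : 0 ≤ (∑ j, v j) ^ 2 / N := by positivity
  have h4 : 2 * (∑ j, v j) ^ 2 / (N:ℝ) = 2 * ((∑ j, v j) ^ 2 / N) := by ring
  linarith


/-- Deterministic consensus with perturbations whose partial sums converge. -/
lemma deterministic_consensus {N : ℕ} (i0 : Fin N)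
    (L : Matrix (Fin N) (Fin N) ℝ) (hLsymm : L.IsSymm)
    (hL1 : L.mulVec (fun _ => (1:ℝ)) = 0)
    (lam : ℝ) (hlam : 0 < lam)
    (hgap : ∀ v : Fin N → ℝ, (∑ i, v i) = 0 →
      lam * (∑ i, (v i) ^ 2) ≤ v ⬝ᵥ L.mulVec v)
    (α : Fin N → ℕ → ℝ) (hapos : ∀ i k, 0 ≤ α i k)
    (ha_div : Tendsto (fun n => ∑ k ∈ Finset.range n, α i0 k) atTop atTop)
    (ha0 : Tendsto (fun k => α i0 k) atTop (nhds 0))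
    (e : ℕ → ℝ) (he0 : ∀ k, 0 ≤ e k) (heb : ∀ i k, |α i k - α i0 k| ≤ e k)
    (heS : Summable e)
    (u : ℕ → Fin N → ℝ)
    (hu : ∀ i : Fin N, ∃ ci : ℝ,
      Tendsto (fun n => ∑ k ∈ Finset.range n, u k i) atTop (nhds ci))
    (x : ℕ → Fin N → ℝ)
    (hxrec : ∀ k i, x (k+1) i = x k i - α i k * (L.mulVec (x k)) i + u k i) :
    ∃ c : ℝ, ∀ i, Tendsto (fun k => x k i) atTop (nhds c) := by
  have hNpos : (0:ℝ) < N := by exact_mod_cast i0.pos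
  choose c hc using hu
  set s : ℕ → Fin N → ℝ := fun n i => ∑ k ∈ Finset.range n, u k i with hs
  set t : ℕ → Fin N → ℝ := fun n i => c i - s n i with ht
  have ht0 : ∀ i, Tendsto (fun n => t n i) atTop (nhds 0) := by
    intro i
    have h := (tendsto_const_nhds (x := c i) (f := atTop)).sub (hc i)
    simpa [ht, hs] using h
  have hnt : Tendsto (fun n => nr (t n)) atTop (nhds 0) := by
    have hlim : Tendsto (fun n => ∑ i : Fin N, |t n i|) atTop (nhds 0) := by
      have h : Tendsto (fun n => ∑ i : Fin N, |t n i|) atTop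
          (nhds (∑ _i : Fin N, (0:ℝ))) := by
        refine tendsto_finset_sum _ (fun i _ => ?_)
        simpa using (ht0 i).abs
      simpa using h
    exact squeeze_zero (fun n => nr_nonneg _) (fun n => nr_le_sum_abs (t n)) hlim
  have hu_eq : ∀ k i, u k i = t k i - t (k+1) i := by
    intro k i
    simp only [ht, hs, Finset.sum_range_succ]
    ring
  set xb : ℕ → ℝ := fun k => (∑ i, x k i) / N with hxb
  set dl : ℕ → Fin N → ℝ := fun k i => x k i - xb k with hdl
  have hSdl : ∀ k, ∑ i, dl k i = 0 := by
    intro k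
    have h := sum_proj_zero hNpos (x k)
    simpa [hdl, hxb] using h
  set Pt : ℕ → Fin N → ℝ := fun k i => t k i - (∑ j, t k j) / N with hPt
  have hSPt : ∀ k, ∑ i, Pt k i = 0 := fun k => by
    simpa [hPt] using sum_proj_zero hNpos (t k)
  have hnrPt : ∀ k, nr (Pt k) ≤ nr (t k) := fun k => by
    simpa [hPt] using nr_proj_le hNpos (t k)
  set y : ℕ → Fin N → ℝ := fun k i => dl k i + Pt k i with hy
  have hSy : ∀ k, ∑ i, y k i = 0 := by
    intro k
    simp only [hy]
    rw [Finset.sum_add_distrib, hSdl k, hSPt k, add_zero]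
  set g : ℕ → Fin N → ℝ := fun k => L.mulVec (dl k) with hg
  have hSg : ∀ k, ∑ i, g k i = 0 := fun k => sum_mulVec_zero hLsymm hL1 _
  have hgx : ∀ k, L.mulVec (x k) = g k := by
    intro k
    have h1 : x k = fun i => dl k i + xb k := by
      funext i; simp only [hdl]; ring
    rw [hg]
    conv_lhs => rw [h1]
    exact mulVec_shift hL1 (dl k) (xb k)
  have hxrec' : ∀ k i, x (k+1) i = x k i - α i k * g k i + u k i := by
    intro k i; rw [hxrec k i, hgx k]
  have hxbrec : ∀ k, xb (k+1) = xb k + (∑ i, u k i)/N - (∑ i, α i k * g k i)/N := by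
    intro k
    have h : ∑ i, x (k+1) i
        = (∑ i, x k i) - (∑ i, α i k * g k i) + ∑ i, u k i := by
      have h0 : ∑ i, x (k+1) i = ∑ i, (x k i - α i k * g k i + u k i) :=
        Finset.sum_congr rfl fun i _ => hxrec' k i
      rw [h0, Finset.sum_add_distrib, Finset.sum_sub_distrib]
    simp only [hxb]
    rw [h]; ring
  have hdlrec : ∀ k i, dl (k+1) i = dl k i
      - (α i k * g k i - (∑ j, α j k * g k j)/N) + (u k i - (∑ j, u k j)/N) := by
    intro k i
    simp only [hdl]
    rw [hxrec' k i, hxbrec k]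
    ring
  have hyrec : ∀ k i, y (k+1) i
      = y k i - (α i k * g k i - (∑ j, α j k * g k j)/N) := by
    intro k i
    simp only [hy, hPt]
    rw [hdlrec k i]
    have h1 : ∑ j, u k j = ∑ j, (t k j - t (k+1) j) :=
      Finset.sum_congr rfl fun j _ => hu_eq k j
    rw [hu_eq k i, h1, Finset.sum_sub_distrib]
    ring
  -- constants
  set CC := CL L with hCC
  have hCC0 : 0 ≤ CC := CL_nonneg L
  set a : ℕ → ℝ := fun k => α i0 k with ha
  set bb : ℕ → ℝ := fun k => lam * a k / 2 with hbb
  set ε : ℕ → ℝ := fun k => CC * e k with hεdef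
  set τ : ℕ → ℝ := fun k => nr (t k) with hτdef
  set c0 : ℝ := min (lam / (CC^2 + 1)) (1/lam) with hc0
  have hc0pos : 0 < c0 := lt_min (by positivity) (by positivity)
  obtain ⟨K₀, hK₀⟩ := (Metric.tendsto_atTop.mp ha0) c0 hc0pos
  have hKa : ∀ k, K₀ ≤ k → a k ≤ c0 := by
    intro k hk
    have h := hK₀ k hk
    rw [Real.dist_eq, sub_zero] at h
    exact (le_abs_self _).trans h.le
  have hacond : ∀ k, K₀ ≤ k → a k * CC^2 ≤ lam ∧ a k * lam ≤ 1 := by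
    intro k hk
    have h1 := hKa k hk
    have hak : 0 ≤ a k := hapos i0 k
    constructor
    · have h2 : a k ≤ lam / (CC^2 + 1) := h1.trans (min_le_left _ _)
      have h3 : a k * (CC^2 + 1) ≤ lam := by
        rw [← le_div_iff₀ (by positivity)]; exact h2
      nlinarith
    · have h2 : a k ≤ 1/lam := h1.trans (min_le_right _ _)
      have h3 : a k * lam ≤ (1/lam) * lam := mul_le_mul_of_nonneg_right h2 hlam.le
      rwa [one_div_mul_cancel hlam.ne'] at h3
  -- one-step estimate
  have hstep : ∀ k, K₀ ≤ k → nr (y (k+1))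
      ≤ (1 - bb k + ε k) * nr (y k) + (2*CC/lam + 1) * (bb k + ε k) * τ k := by
    intro k hk
    have hak : 0 ≤ a k := hapos i0 k
    obtain ⟨ha1, ha2⟩ := hacond k hk
    -- decomposition
    set A1 : Fin N → ℝ := fun i => y k i - a k * (L.mulVec (y k)) i with hA1
    set A2 : Fin N → ℝ := fun i => a k * (L.mulVec (Pt k)) i with hA2
    set A3 : Fin N → ℝ := fun i =>
      -((α i k - a k) * g k i - (∑ j, (α j k - a k) * g k j)/N) with hA3
    have hgY : g k = fun i => (L.mulVec (y k)) i - (L.mulVec (Pt k)) i := by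
      have hdlY : dl k = (y k) - (Pt k) := by
        funext j; simp only [hy, Pi.sub_apply]; ring
      simp only [hg]
      rw [hdlY, Matrix.mulVec_sub]
      rfl
    have hSsplit : (∑ j, α j k * g k j)
        = (∑ j, (α j k - a k) * g k j) + a k * (∑ j, g k j) := by
      rw [Finset.mul_sum, ← Finset.sum_add_distrib]
      exact Finset.sum_congr rfl fun j _ => by ring
    have hdec : y (k+1) = A1 + A2 + A3 := by
      funext i
      simp only [Pi.add_apply, hA1, hA2, hA3]
      rw [hyrec k i, hSsplit, hSg k]
      have hgi : g k i = (L.mulVec (y k)) i - (L.mulVec (Pt k)) i := by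
        rw [hgY]
      rw [hgi]
      ring
    -- bounds on the three pieces
    have hb1 : nr A1 ≤ (1 - bb k) * nr (y k) := by
      have h := contraction hlam hgap (hSy k) hak ha1 ha2
      simpa [hA1, hbb] using h
    have hb2 : nr A2 ≤ a k * CC * τ k := by
      have h1 : nr A2 = |a k| * nr (L.mulVec (Pt k)) := nr_smul (a k) _
      rw [h1, abs_of_nonneg hak]
      have h2 : nr (L.mulVec (Pt k)) ≤ CC * nr (Pt k) := nr_mulVec_le L (Pt k)
      have h3 : nr (Pt k) ≤ τ k := hnrPt k
      have h4 : nr (L.mulVec (Pt k)) ≤ CC * τ k :=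
        h2.trans (mul_le_mul_of_nonneg_left h3 hCC0)
      calc a k * nr (L.mulVec (Pt k)) ≤ a k * (CC * τ k) :=
            mul_le_mul_of_nonneg_left h4 hak
        _ = a k * CC * τ k := by ring
    have hb3 : nr A3 ≤ ε k * (nr (y k) + τ k) := by
      have h0 : nr A3 = nr (fun i => (α i k - a k) * g k i
          - (∑ j, (α j k - a k) * g k j)/N) := nr_neg _
      have h1 : nr (fun i => (α i k - a k) * g k i
          - (∑ j, (α j k - a k) * g k j)/N) ≤ nr (fun i => (α i k - a k) * g k i) :=
        nr_proj_le hNpos _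
      have h2 : nr (fun i => (α i k - a k) * g k i) ≤ nr (fun i => e k * g k i) := by
        refine nr_le_nr_of_abs_le fun i => ?_
        rw [abs_mul, abs_mul, abs_of_nonneg (he0 k)]
        exact mul_le_mul_of_nonneg_right (heb i k) (abs_nonneg _)
      have h3 : nr (fun i => e k * g k i) = e k * nr (g k) := by
        rw [nr_smul, abs_of_nonneg (he0 k)]
      have h4 : nr (g k) ≤ CC * nr (dl k) := nr_mulVec_le L (dl k)
      have h5 : nr (dl k) ≤ nr (y k) + τ k := by
        have hdlY : dl k = (y k) + (fun i => -(Pt k i)) := by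
          funext j; simp only [hy, Pi.add_apply]; ring
        rw [hdlY]
        refine (nr_add _ _).trans ?_
        rw [nr_neg]
        exact add_le_add_right (hnrPt k) _
      have h6 : nr (g k) ≤ CC * (nr (y k) + τ k) :=
        h4.trans (mul_le_mul_of_nonneg_left h5 hCC0)
      rw [h0]
      refine (h1.trans (h2.trans_eq h3)).trans ?_
      simp only [hεdef]
      calc e k * nr (g k) ≤ e k * (CC * (nr (y k) + τ k)) :=
            mul_le_mul_of_nonneg_left h6 (he0 k)
        _ = CC * e k * (nr (y k) + τ k) := by ring
    have htri : nr (y (k+1)) ≤ nr A1 + nr A2 + nr A3 := by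
      rw [hdec]; exact nr_add3 A1 A2 A3
    have hbb0 : 0 ≤ bb k := by simp only [hbb]; positivity
    have hε0' : 0 ≤ ε k := mul_nonneg hCC0 (he0 k)
    have hτ0' : 0 ≤ τ k := nr_nonneg _
    have hY0' : 0 ≤ nr (y k) := nr_nonneg _
    have haCC : a k * CC = (2*CC/lam) * bb k := by
      simp only [hbb]
      field_simp
    have hfin : nr A1 + nr A2 + nr A3
        ≤ (1 - bb k + ε k) * nr (y k) + (2*CC/lam + 1) * (bb k + ε k) * τ k := by
      have h1 : a k * CC * τ k ≤ (2*CC/lam) * bb k * τ k := by rw [haCC]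
      have h2 : (2*CC/lam) * bb k * τ k + ε k * τ k
          ≤ (2*CC/lam + 1) * (bb k + ε k) * τ k := by
        have hcl : 0 ≤ 2*CC/lam := by positivity
        nlinarith [mul_nonneg hτ0' hε0', mul_nonneg hτ0' hbb0,
          mul_nonneg hcl (mul_nonneg hε0' hτ0')]
      nlinarith [hb1, hb2, hb3]
    exact htri.trans hfin
  -- apply the scalar lemma
  have hY0 : Tendsto (fun k => nr (y k)) atTop (nhds 0) := by
    refine seq_tendsto_zero (C := 2*CC/lam + 1) (K₀ := K₀) (by positivity)
      (fun k => nr_nonneg _) (fun k => nr_nonneg _)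
      (fun k => mul_nonneg hCC0 (he0 k)) ?_ hstep (heS.mul_left CC) hnt ?_
    · intro k hk
      have hak : 0 ≤ a k := hapos i0 k
      obtain ⟨_, ha2⟩ := hacond k hk
      constructor
      · simp only [hbb]; positivity
      · simp only [hbb]; nlinarith
    · have h : (fun n => ∑ k ∈ Finset.range n, bb k)
          = fun n => (lam/2) * ∑ k ∈ Finset.range n, a k := by
        funext n
        rw [Finset.mul_sum]
        exact Finset.sum_congr rfl fun k _ => by simp only [hbb]; ring
      rw [h]
      exact Tendsto.const_mul_atTop (by positivity) ha_div
  have hF : Tendsto (fun k => nr (y k) + τ k) atTop (nhds 0) := by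
    have h := hY0.add hnt
    simpa using h
  have hdl_le : ∀ k, nr (dl k) ≤ nr (y k) + τ k := by
    intro k
    have hdlY : dl k = (y k) + (fun i => -(Pt k i)) := by
      funext j; simp only [hy, Pi.add_apply]; ring
    rw [hdlY]
    refine (nr_add _ _).trans ?_
    rw [nr_neg]
    exact add_le_add_right (hnrPt k) _
  have hdl0 : ∀ i, Tendsto (fun k => dl k i) atTop (nhds 0) := by
    intro i
    refine squeeze_zero_norm (fun k => ?_) hF
    rw [Real.norm_eq_abs]
    exact (coord_abs_le (dl k) i).trans (hdl_le k)
  -- boundedness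
  obtain ⟨DD, hDD⟩ := hF.bddAbove_range
  have hDDle : ∀ k, nr (dl k) ≤ DD := fun k =>
    (hdl_le k).trans (hDD (Set.mem_range_self k))
  -- summable correction term
  have hr_abs : ∀ k, |∑ j, (α j k - a k) * g k j| ≤ e k * (N * (CC * DD)) := by
    intro k
    have hgb : nr (g k) ≤ CC * DD :=
      (nr_mulVec_le L (dl k)).trans (mul_le_mul_of_nonneg_left (hDDle k) hCC0)
    have hg0 : 0 ≤ nr (g k) := nr_nonneg _
    calc |∑ j, (α j k - a k) * g k j| ≤ ∑ j, |(α j k - a k) * g k j| :=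
          Finset.abs_sum_le_sum_abs _ _
      _ ≤ ∑ _j : Fin N, e k * nr (g k) := by
          refine Finset.sum_le_sum fun j _ => ?_
          rw [abs_mul]
          exact mul_le_mul (heb j k) (coord_abs_le (g k) j) (abs_nonneg _) (he0 k)
      _ = N * (e k * nr (g k)) := by
          rw [Finset.sum_const, Finset.card_univ, Fintype.card_fin, nsmul_eq_mul]
      _ ≤ e k * (N * (CC * DD)) := by
          have h1 : e k * nr (g k) ≤ e k * (CC * DD) :=
            mul_le_mul_of_nonneg_left hgb (he0 k)
          nlinarith [he0 k]
  have hrsum : Summable (fun k => (∑ j, (α j k - a k) * g k j)/N) := by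
    have h1 : Summable (fun k => e k * (N * (CC * DD))) := heS.mul_right _
    have h2 : Summable (fun k => ∑ j, (α j k - a k) * g k j) :=
      Summable.of_abs (Summable.of_nonneg_of_le (fun k => abs_nonneg _) hr_abs h1)
    exact h2.div_const _
  obtain ⟨R, hR⟩ := hrsum
  have hRt : Tendsto (fun n => ∑ k ∈ Finset.range n,
      (∑ j, (α j k - a k) * g k j)/N) atTop (nhds R) := hR.tendsto_sum_nat
  have hSag : ∀ k, (∑ i, α i k * g k i) = ∑ j, (α j k - a k) * g k j := by
    intro k
    have hSsplit : (∑ j, α j k * g k j)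
        = (∑ j, (α j k - a k) * g k j) + a k * (∑ j, g k j) := by
      rw [Finset.mul_sum, ← Finset.sum_add_distrib]
      exact Finset.sum_congr rfl fun j _ => by ring
    rw [hSsplit, hSg k]; ring
  have hxbn : ∀ n, xb n = xb 0 + ((∑ i, s n i)/N
      - ∑ k ∈ Finset.range n, (∑ j, (α j k - a k) * g k j)/N) := by
    intro n
    induction n with
    | zero => simp [hs]
    | succ n ih =>
      have hsn : ∑ i, s (n+1) i = (∑ i, s n i) + ∑ i, u n i := by
        rw [← Finset.sum_add_distrib]
        refine Finset.sum_congr rfl fun i _ => ?_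
        simp [hs, Finset.sum_range_succ]
      rw [hxbrec n, ih, Finset.sum_range_succ, hsn, hSag n]
      ring
  have hsn_lim : Tendsto (fun n => (∑ i, s n i)/N) atTop (nhds ((∑ i, c i)/N)) := by
    refine Tendsto.div_const ?_ _
    exact tendsto_finset_sum _ fun i _ => hc i
  have hxb_lim : Tendsto xb atTop (nhds (xb 0 + ((∑ i, c i)/N - R))) := by
    refine Tendsto.congr (fun n => (hxbn n).symm) ?_
    exact ((hsn_lim.sub hRt).const_add (xb 0))
  refine ⟨xb 0 + ((∑ i, c i)/N - R), fun i => ?_⟩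
  have hxi : ∀ k, x k i = dl k i + xb k := by
    intro k; simp only [hdl]; ring
  have h := (hdl0 i).add hxb_lim
  rw [zero_add] at h
  exact Tendsto.congr (fun k => (hxi k).symm) h



lemma integrable_mul_L2 {Ω : Type*} {mΩ : MeasurableSpace Ω} {μ : Measure Ω}
    {f g : Ω → ℝ} (hf : MemLp f 2 μ) (hg : MemLp g 2 μ) :
    Integrable (f * g) μ := by
  have h1 : Integrable (fun ω => (f ω ^ 2 + g ω ^ 2)/2) μ :=
    (hf.integrable_sq.add hg.integrable_sq).div_const 2
  refine Integrable.mono' h1 (hf.aestronglyMeasurable.mul hg.aestronglyMeasurable) ?_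
  filter_upwards [] with ω
  rw [Pi.mul_apply, Real.norm_eq_abs, abs_mul]
  nlinarith [sq_nonneg (|f ω| - |g ω|), sq_abs (f ω), sq_abs (g ω),
    abs_nonneg (f ω), abs_nonneg (g ω)]

/-- A weighted sum of square-integrable martingale differences with square-summable
weights converges almost surely. -/
lemma martingale_part_converges {Ω : Type*} {mΩ : MeasurableSpace Ω}
    (μ : Measure Ω) [IsProbabilityMeasure μ] (ℱ : Filtration ℕ mΩ)
    (M : ℝ) (hM : 0 ≤ M)
    (aseq : ℕ → ℝ) (hsq : Summable (fun k => aseq k ^ 2))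
    (W : ℕ → Ω → ℝ)
    (hWmeas : ∀ k, Measurable[ℱ (k + 1)] (W k))
    (hWL2 : ∀ k, MemLp (W k) 2 μ)
    (hWcond : ∀ k, μ[W k | ℱ k] =ᵐ[μ] 0)
    (hWvar : ∀ k, ∫ ω, (W k ω) ^ 2 ∂μ ≤ M) :
    ∀ᵐ ω ∂μ, ∃ ci : ℝ,
      Tendsto (fun n => ∑ k ∈ Finset.range n, aseq k * W k ω) atTop (nhds ci) := by
  set f : ℕ → Ω → ℝ := fun n ω => ∑ k ∈ Finset.range n, aseq k * W k ω with hf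
  have hWint : ∀ k, Integrable (W k) μ := fun k => (hWL2 k).integrable one_le_two
  have hWsm : ∀ k n, k < n → StronglyMeasurable[ℱ n] (W k) := fun k n hk =>
    ((hWmeas k).mono (ℱ.mono hk) le_rfl).stronglyMeasurable
  have hadp : ∀ n, StronglyMeasurable[ℱ n] (f n) := by
    intro n
    refine Finset.stronglyMeasurable_fun_sum _ fun k hk => ?_
    have hk' : k < n := Finset.mem_range.mp hk
    exact ((hWsm k n hk').const_mul _)
  have hfL2 : ∀ n, MemLp (f n) 2 μ := by
    intro n
    have h := memLp_finset_sum' (μ := μ) (p := 2) (Finset.range n)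
      (f := fun k => fun ω => aseq k * W k ω) (fun k _ => (hWL2 k).const_mul (aseq k))
    have heq : (∑ k ∈ Finset.range n, fun ω => aseq k * W k ω) = f n := by
      funext ω
      simp [hf, Finset.sum_apply]
    rwa [heq] at h
  have hfint : ∀ n, Integrable (f n) μ := fun n => (hfL2 n).integrable one_le_two
  have hfsucc : ∀ n, f (n+1) = f n + fun ω => aseq n * W n ω := by
    intro n; funext ω; simp [hf, Finset.sum_range_succ]
  -- martingale property
  have hmart : Martingale f ℱ μ := by
    refine martingale_nat (fun n => hadp n) hfint ?_
    intro n
    have h1 : μ[f (n+1)|ℱ n] =ᵐ[μ] μ[f n|ℱ n] + μ[fun ω => aseq n * W n ω|ℱ n] := by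
      rw [hfsucc n]
      exact condExp_add (hfint n) ((hWint n).const_mul _) _
    have h2 : μ[f n|ℱ n] = f n :=
      condExp_of_stronglyMeasurable (ℱ.le n) (hadp n) (hfint n)
    have h3 : μ[fun ω => aseq n * W n ω|ℱ n] =ᵐ[μ] 0 := by
      have hsmul : (fun ω => aseq n * W n ω) = aseq n • W n := by
        funext ω; simp [smul_eq_mul]
      rw [hsmul]
      refine (condExp_smul (aseq n) (W n) _).trans ?_
      filter_upwards [hWcond n] with ω hω
      simp [hω]
    filter_upwards [h1, h3] with ω hω1 hω3
    rw [hω1, Pi.add_apply, congrFun h2 ω, hω3, Pi.zero_apply, add_zero]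
  -- second moment bound by induction
  have hvar : ∀ n, ∫ ω, (f n ω) ^ 2 ∂μ ≤ M * ∑ k ∈ Finset.range n, aseq k ^ 2 := by
    intro n
    induction n with
    | zero => simp [hf]
    | succ n ih =>
      have hcross : ∫ ω, f n ω * W n ω ∂μ = 0 := by
        have hint : Integrable (f n * W n) μ := integrable_mul_L2 (hfL2 n) (hWL2 n)
        have hce : μ[f n * W n|ℱ n] =ᵐ[μ] f n * μ[W n|ℱ n] :=
          condExp_mul_of_stronglyMeasurable_left (hadp n) hint (hWint n)
        have hce0 : μ[f n * W n|ℱ n] =ᵐ[μ] 0 := by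
          filter_upwards [hce, hWcond n] with ω h1 h2
          simp [h1, Pi.mul_apply, h2]
        have h4 : ∫ ω, (μ[f n * W n|ℱ n]) ω ∂μ = ∫ ω, (f n * W n) ω ∂μ :=
          integral_condExp (ℱ.le n)
        have h5 : ∫ ω, f n ω * W n ω ∂μ = ∫ ω, (f n * W n) ω ∂μ := rfl
        rw [h5, ← h4, integral_congr_ae hce0]
        simp
      have hexp : (fun ω => f (n+1) ω ^ 2)
          = fun ω => f n ω ^ 2 + (2 * aseq n) * (f n ω * W n ω)
            + aseq n ^ 2 * W n ω ^ 2 := by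
        funext ω
        rw [hfsucc n]
        simp only [Pi.add_apply]
        ring
      have hint1 : Integrable (fun ω => f n ω ^ 2) μ := (hfL2 n).integrable_sq
      have hint2 : Integrable (fun ω => (2 * aseq n) * (f n ω * W n ω)) μ :=
        (integrable_mul_L2 (hfL2 n) (hWL2 n)).const_mul _
      have hint3 : Integrable (fun ω => aseq n ^ 2 * W n ω ^ 2) μ :=
        ((hWL2 n).integrable_sq).const_mul _
      have hint12 : Integrable
          (fun ω => f n ω ^ 2 + 2 * aseq n * (f n ω * W n ω)) μ := hint1.add hint2
      have heval : ∫ ω, f (n+1) ω ^ 2 ∂μ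
          = ∫ ω, f n ω ^ 2 ∂μ + (2 * aseq n) * ∫ ω, f n ω * W n ω ∂μ
            + aseq n ^ 2 * ∫ ω, W n ω ^ 2 ∂μ := by
        rw [hexp, integral_add hint12 hint3, integral_add hint1 hint2,
          integral_const_mul, integral_const_mul]
      rw [heval, hcross, Finset.sum_range_succ, mul_add]
      have h5 : aseq n ^ 2 * ∫ ω, W n ω ^ 2 ∂μ ≤ M * aseq n ^ 2 := by
        have := mul_le_mul_of_nonneg_left (hWvar n) (sq_nonneg (aseq n))
        linarith [this]
      linarith
  -- L¹ bound
  set B := M * ∑' k, aseq k ^ 2 with hB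
  have hvarB : ∀ n, ∫ ω, (f n ω) ^ 2 ∂μ ≤ B := by
    intro n
    refine (hvar n).trans ?_
    rw [hB]
    exact mul_le_mul_of_nonneg_left
      (Summable.sum_le_tsum _ (fun k _ => sq_nonneg _) hsq) hM
  have hB0 : 0 ≤ B := by
    rw [hB]; exact mul_nonneg hM (tsum_nonneg fun k => sq_nonneg _)
  have hbdd : ∀ n, eLpNorm (f n) 1 μ ≤ ((1 + B).toNNReal : ℝ≥0∞) := by
    intro n
    have hint1 : Integrable (fun ω => f n ω ^ 2) μ := (hfL2 n).integrable_sq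
    have habs : ∫ ω, ‖f n ω‖ ∂μ ≤ 1 + B := by
      have hmono : ∫ ω, ‖f n ω‖ ∂μ ≤ ∫ ω, (1 + f n ω ^ 2) ∂μ := by
        refine integral_mono (hfint n).norm ((integrable_const 1).add hint1) ?_
        intro ω
        show ‖f n ω‖ ≤ 1 + f n ω ^ 2
        rw [Real.norm_eq_abs]
        nlinarith [sq_nonneg (|f n ω| - 1), sq_abs (f n ω), abs_nonneg (f n ω)]
      have h2 : ∫ ω, (1 + f n ω ^ 2) ∂μ = 1 + ∫ ω, f n ω ^ 2 ∂μ := by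
        rw [integral_add (integrable_const 1) hint1]
        simp [measure_univ]
      rw [h2] at hmono
      linarith [hvarB n]
    have h3 : eLpNorm (f n) 1 μ = ENNReal.ofReal (∫ ω, ‖f n ω‖ ∂μ) := by
      rw [eLpNorm_one_eq_lintegral_enorm,
        ← ofReal_integral_norm_eq_lintegral_enorm (hfint n)]
    rw [h3]
    have h4 : ((1 + B).toNNReal : ℝ≥0∞) = ENNReal.ofReal (1 + B) := rfl
    rw [h4]
    exact ENNReal.ofReal_le_ofReal habs
  exact hmart.submartingale.exists_ae_tendsto_of_bdd hbdd


end ConsensusAux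

open MeasureTheory ConsensusAux Asymptotics

/-- Corollary 3 (almost sure consensus with heterogeneous stepsizes): if the stepsize
discrepancies are summable, every agent's state converges almost surely to a common
random variable. -/
theorem almost_sure_consensus_heterogeneous_stepsizes {N : ℕ} (hN : 2 ≤ N)
    {Ω : Type*} {mΩ : MeasurableSpace Ω} (μ : MeasureTheory.Measure Ω) [MeasureTheory.IsProbabilityMeasure μ]
    (ℱ : MeasureTheory.Filtration ℕ mΩ)
    (L : Matrix (Fin N) (Fin N) ℝ) (hLsymm : L.IsSymm)
    (hL1 : L.mulVec (fun _ => (1 : ℝ)) = 0)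
    (hLoffdiag : ∀ i j, i ≠ j → L i j ≤ 0)
    (lam : ℝ) (hlam : 0 < lam)
    (hgap : ∀ v : Fin N → ℝ, (∑ i, v i) = 0 →
      lam * (∑ i, (v i) ^ 2) ≤ v ⬝ᵥ L.mulVec v)
    (α : Fin N → ℕ → ℝ) (hα_pos : ∀ i k, 0 < α i k)
    (hα_div : ∀ i, Filter.Tendsto (fun n => ∑ k ∈ Finset.range n, α i k) Filter.atTop Filter.atTop)
    (hα_sq : ∀ i, Summable (fun k => (α i k) ^ 2))
    (hdiag : ∀ (i : Fin N) (k : ℕ), 0 < 1 - α i k * L i i)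
    (M : ℝ) (hM : 0 ≤ M)
    (w : ℕ → Ω → Fin N → ℝ)
    (hw_meas : ∀ k, Measurable[ℱ (k + 1)] (w k))
    (hw_L2 : ∀ k, MeasureTheory.MemLp (w k) 2 μ)
    (hw_cond : ∀ k i, μ[(fun ω => w k ω i) | ℱ k] =ᵐ[μ] 0)
    (hw_bound : ∀ k, ∫ ω, (∑ i, (w k ω i) ^ 2) ∂μ ≤ M)
    (x : ℕ → Ω → Fin N → ℝ) (ξ : Fin N → ℝ) (hx0 : ∀ ω, x 0 ω = ξ)
    (hx_meas : ∀ k, Measurable[ℱ k] (x k))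
    (hrec : ∀ k ω, x (k + 1) ω =
      ((1 : Matrix (Fin N) (Fin N) ℝ)
          - (Matrix.diagonal fun i => α i k) * L).mulVec (x k ω)
        + (Matrix.diagonal fun i => α i k).mulVec (w k ω))
    (hα_sum_close : Summable fun k => ⨆ i : Fin N, ⨆ j : Fin N, |α i k - α j k|) :
    ∃ xstar : Ω → ℝ, Measurable xstar ∧
      ∀ i : Fin N, ∀ᵐ ω ∂μ,
        Tendsto (fun k => x k ω i) atTop (nhds (xstar ω)) := by
  classical
  have hN0 : 0 < N := by omega
  set i0 : Fin N := ⟨0, hN0⟩ with hi0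
  set e : ℕ → ℝ := fun k => ⨆ i : Fin N, ⨆ j : Fin N, |α i k - α j k| with he
  have heb : ∀ i j k, |α i k - α j k| ≤ e k := by
    intro i j k
    have h1 : |α i k - α j k| ≤ ⨆ j : Fin N, |α i k - α j k| :=
      le_ciSup (f := fun j : Fin N => |α i k - α j k|) (Finite.bddAbove_range _) j
    exact h1.trans
      (le_ciSup (Finite.bddAbove_range (fun i => ⨆ j : Fin N, |α i k - α j k|)) i)
  have he0 : ∀ k, 0 ≤ e k := fun k => by
    have h := heb i0 i0 k; simpa using h
  have heS : Summable e := hα_sum_close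
  have hW2 : ∀ k (i : Fin N), MemLp (fun ω => w k ω i) 2 μ := by
    intro k i
    exact (ContinuousLinearMap.proj (R := ℝ) (φ := fun _ : Fin N => ℝ) i).comp_memLp'
      (hw_L2 k)
  have hWvar : ∀ k (i : Fin N), ∫ ω, (w k ω i) ^ 2 ∂μ ≤ M := by
    intro k i
    have hintj : ∀ j : Fin N, Integrable (fun ω => (w k ω j) ^ 2) μ :=
      fun j => (hW2 k j).integrable_sq
    have h1 : ∫ ω, (w k ω i) ^ 2 ∂μ ≤ ∫ ω, ∑ j, (w k ω j) ^ 2 ∂μ := by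
      have hpt : ∀ ω, (w k ω i) ^ 2 ≤ ∑ j, (w k ω j) ^ 2 := fun ω =>
        Finset.single_le_sum (f := fun j => (w k ω j) ^ 2)
          (fun j _ => sq_nonneg _) (Finset.mem_univ i)
      exact integral_mono (hintj i) (integrable_finset_sum _ fun j _ => hintj j) hpt
    exact h1.trans (hw_bound k)
  have hae : ∀ᵐ ω ∂μ, ∀ i : Fin N, ∃ ci : ℝ,
      Tendsto (fun n => ∑ k ∈ Finset.range n, α i k * w k ω i) atTop (nhds ci) := by
    rw [MeasureTheory.ae_all_iff]
    intro i
    exact martingale_part_converges μ ℱ M hM (α i) (hα_sq i) (fun k ω => w k ω i)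
      (fun k => (measurable_pi_apply i).comp (hw_meas k)) (fun k => hW2 k i)
      (fun k => hw_cond k i) (fun k => hWvar k i)
  have hxrec' : ∀ ω k (i : Fin N), x (k+1) ω i
      = x k ω i - α i k * (L.mulVec (x k ω)) i + α i k * w k ω i := by
    intro ω k i
    rw [hrec k ω]
    rw [Matrix.sub_mulVec, Matrix.one_mulVec, ← Matrix.mulVec_mulVec]
    simp only [Pi.add_apply, Pi.sub_apply, Matrix.mulVec_diagonal]
  have hα0 : Tendsto (fun k => α i0 k) atTop (nhds 0) := by
    have h := (hα_sq i0).tendsto_atTop_zero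
    have h2 : Tendsto (fun k => Real.sqrt ((α i0 k) ^ 2)) atTop (nhds (Real.sqrt 0)) :=
      (Real.continuous_sqrt.tendsto _).comp h
    rw [Real.sqrt_zero] at h2
    refine h2.congr fun k => ?_
    rw [Real.sqrt_sq (hα_pos i0 k).le]
  set xstar : Ω → ℝ := fun ω => Filter.limsup (fun k => x k ω i0) atTop with hxs
  have hxmeas : Measurable xstar :=
    Measurable.limsup (fun k =>
      (measurable_pi_apply i0).comp ((hx_meas k).mono (ℱ.le k) le_rfl))
  refine ⟨xstar, hxmeas, ?_⟩
  intro i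
  filter_upwards [hae] with ω hω
  obtain ⟨c, hc⟩ := deterministic_consensus i0 L hLsymm hL1 lam hlam hgap α
    (fun i k => (hα_pos i k).le) (hα_div i0) hα0 e he0 (fun i k => heb i i0 k) heS
    (fun k i => α i k * w k ω i) (fun i => hω i) (fun k => x k ω)
    (fun k i => hxrec' ω k i)
  have hlim : xstar ω = c := (hc i0).limsup_eq
  rw [hlim]
  exact hc i
end

section
/- Let N ≥ 1 and m ≥ 1 be integers, let L_1, …, L_m be real symmetric N×N matrices, let ᾱ ∈ [0,1], let α_1, …, α_m ∈ [0, ᾱ], and set K = max{1, max_{1≤i≤m} ‖L_i‖}, where ‖·‖ is the spectral norm. Let P = (I_N − α_m L_m)(I_N − α_{m−1} L_{m−1})⋯(I_N − α_1 L_1). Then ‖PᵀP − I_N + 2∑_{i=1}^m α_i L_i‖ ≤ ᾱ²(2^{2m} − 2m − 1)K^{2m}. -/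
open Matrix

/-- The spectral (operator 2-)norm of a real square matrix. -/
noncomputable def specNorm {N : ℕ} (M : Matrix (Fin N) (Fin N) ℝ) : ℝ :=
  ‖Matrix.toEuclideanCLM (𝕜 := ℝ) M‖


lemma listSumNormBound {A : Type*} [SeminormedAddCommGroup A] (c : ℝ) :
    ∀ (l : List A), (∀ x ∈ l, ‖x‖ ≤ c) → ‖l.sum‖ ≤ l.length * c := by
  intro l
  induction l with
  | nil => simp
  | cons x t ih =>
    intro h
    have := ih fun y hy => h y (List.mem_cons_of_mem x hy)
    have hx := h x List.mem_cons_self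
    calc ‖(x :: t).sum‖ = ‖x + t.sum‖ := by rw [List.sum_cons]
      _ ≤ ‖x‖ + ‖t.sum‖ := norm_add_le _ _
      _ ≤ c + t.length * c := by linarith
      _ = (x :: t).length * c := by simp; ring

lemma key {A : Type*} [NormedRing A] [NormOneClass A] (a Kc : ℝ)
    (ha0 : 0 ≤ a) (ha1 : a ≤ 1) (hK : 1 ≤ Kc) :
    ∀ (l : List A), (∀ x ∈ l, ‖x‖ ≤ a * Kc) →
      ‖(l.map (1 + ·)).prod - 1 - l.sum‖
        ≤ a ^ 2 * (2 ^ l.length - l.length - 1) * Kc ^ l.length := by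
  intro l
  induction l with
  | nil => simp
  | cons x t ih =>
    intro hmem
    have hx : ‖x‖ ≤ a * Kc := hmem x List.mem_cons_self
    have ht : ∀ y ∈ t, ‖y‖ ≤ a * Kc := fun y hy => hmem y (List.mem_cons_of_mem x hy)
    have hE := ih ht
    set n := t.length with hn
    set P := (t.map (1 + ·)).prod with hP
    set S := t.sum with hS
    have hsum : ‖S‖ ≤ (n : ℝ) * (a * Kc) := listSumNormBound _ t ht
    have key_eq : ((x :: t).map (1 + ·)).prod - 1 - (x :: t).sum
        = (P - 1 - S) + x * (P - 1 - S) + x * S := by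
      simp only [List.map_cons, List.prod_cons, List.sum_cons]
      noncomm_ring
    have h2n : (n : ℝ) + 1 ≤ 2 ^ n := by
      exact_mod_cast Nat.succ_le_of_lt (Nat.lt_two_pow_self (n := n))
    have hKc0 : (0:ℝ) ≤ Kc := le_trans zero_le_one hK
    have hKn : Kc ^ n ≤ Kc ^ (n + 1) := pow_le_pow_right₀ hK (Nat.le_succ n)
    have hKn0 : (0:ℝ) ≤ Kc ^ n := pow_nonneg hKc0 n
    have hK2 : (n:ℝ) * Kc ^ 2 ≤ (n:ℝ) * Kc ^ (n + 1) := by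
      rcases Nat.eq_zero_or_pos n with h | h
      · simp [h]
      · have : Kc ^ 2 ≤ Kc ^ (n+1) := pow_le_pow_right₀ hK (by omega)
        have : (0:ℝ) ≤ (n:ℝ) := Nat.cast_nonneg n
        nlinarith [pow_le_pow_right₀ hK (show 2 ≤ n+1 by omega)]
    have hg0 : 0 ≤ a ^ 2 * (2 ^ n - n - 1) * Kc ^ n := by
      apply mul_nonneg (mul_nonneg (sq_nonneg a) (by linarith)) hKn0
    have hnorm : ‖((x :: t).map (1 + ·)).prod - 1 - (x :: t).sum‖
        ≤ (1 + a * Kc) * ‖P - 1 - S‖ + (a * Kc) * ((n : ℝ) * (a * Kc)) := by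
      rw [key_eq]
      have h1 : ‖(P - 1 - S) + x * (P - 1 - S) + x * S‖
          ≤ ‖P - 1 - S‖ + ‖x‖ * ‖P - 1 - S‖ + ‖x‖ * ‖S‖ := by
        refine (norm_add_le _ _).trans ?_
        gcongr
        · exact (norm_add_le _ _).trans (by gcongr; exact norm_mul_le _ _)
        · exact norm_mul_le _ _
      refine h1.trans ?_
      have h0 : (0:ℝ) ≤ ‖P - 1 - S‖ := norm_nonneg _
      nlinarith [norm_nonneg S, norm_nonneg x, mul_nonneg ha0 hKc0]
    refine hnorm.trans ?_
    have step1 : (1 + a * Kc) * ‖P - 1 - S‖ + (a * Kc) * ((n : ℝ) * (a * Kc))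
        ≤ (1 + a * Kc) * (a ^ 2 * (2 ^ n - n - 1) * Kc ^ n) + a ^ 2 * ((n:ℝ) * Kc ^ (n+1)) := by
      have hpos : (0:ℝ) ≤ 1 + a * Kc := by positivity
      have : (a * Kc) * ((n : ℝ) * (a * Kc)) = a ^ 2 * ((n:ℝ) * Kc ^ 2) := by ring
      rw [this]
      gcongr
    refine step1.trans ?_
    have step2 : (1 + a * Kc) * (a ^ 2 * (2 ^ n - n - 1) * Kc ^ n)
        ≤ 2 * Kc * (a ^ 2 * (2 ^ n - n - 1) * Kc ^ n) := by
      apply mul_le_mul_of_nonneg_right _ hg0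
      nlinarith
    have final : 2 * Kc * (a ^ 2 * (2 ^ n - n - 1) * Kc ^ n) + a ^ 2 * ((n:ℝ) * Kc ^ (n+1))
        = a ^ 2 * (2 ^ (n+1) - ((n:ℝ)+1) - 1) * Kc ^ (n+1) := by
      ring
    have len : (x :: t).length = n + 1 := by simp [hn]
    rw [len]
    push_cast
    linarith

set_option maxHeartbeats 1000000 in
set_option synthInstance.maxHeartbeats 400000 in
/-- Matrix-product expansion bound (equation (24) in the proof of Theorem 4): with
`P = (I − αₘ Lₘ) ⋯ (I − α₁ L₁)`, `0 ≤ αᵢ ≤ ᾱ ≤ 1`, `Lᵢ` symmetric and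
`K = max {1, maxᵢ ‖Lᵢ‖}`, one has
`‖PᵀP − I + 2 ∑ᵢ αᵢ Lᵢ‖ ≤ ᾱ² (2^{2m} − 2m − 1) K^{2m}`. -/
theorem product_expansion_bound {N m : ℕ} (hN : 1 ≤ N) (hm : 1 ≤ m)
    (L : Fin m → Matrix (Fin N) (Fin N) ℝ) (hLsymm : ∀ i, (L i).IsSymm)
    (abar : ℝ) (habar0 : 0 ≤ abar) (habar1 : abar ≤ 1)
    (α : Fin m → ℝ) (hα0 : ∀ i, 0 ≤ α i) (hα1 : ∀ i, α i ≤ abar)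
    (K : ℝ) (hK : K = max 1 (⨆ i : Fin m, specNorm (L i))) :
    specNorm
        ((List.ofFn fun i : Fin m =>
            (1 : Matrix (Fin N) (Fin N) ℝ) - α i • L i).reverse.prodᵀ
          * (List.ofFn fun i : Fin m =>
            (1 : Matrix (Fin N) (Fin N) ℝ) - α i • L i).reverse.prod
          - 1 + (2 : ℝ) • ∑ i, α i • L i)
      ≤ abar ^ 2 * ((2 : ℝ) ^ (2 * m) - 2 * m - 1) * K ^ (2 * m) := by
  haveI : NeZero N := ⟨by omega⟩
  haveI : Nontrivial (EuclideanSpace ℝ (Fin N)) := inferInstance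
  set l : List (Matrix (Fin N) (Fin N) ℝ) :=
    List.ofFn fun i : Fin m => (1 : Matrix (Fin N) (Fin N) ℝ) - α i • L i with hl
  have hsym : ∀ x ∈ l, xᵀ = x := by
    intro x hx
    rw [hl, List.mem_ofFn] at hx
    obtain ⟨i, rfl⟩ := hx
    rw [transpose_sub, transpose_one, transpose_smul, (hLsymm i).eq]
  have hPt : (l.reverse.prod)ᵀ = l.prod := by
    rw [Matrix.transpose_list_prod]
    have h1 : l.reverse.map transpose = l.reverse := by
      refine (List.map_congr_left ?_).trans (List.map_id _)
      intro x hx; exact hsym x (List.mem_reverse.mp hx)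
    rw [h1, List.reverse_reverse]
  set d : List (Matrix (Fin N) (Fin N) ℝ) :=
    List.ofFn fun i : Fin m => -(α i • L i) with hd
  set c : List (Matrix (Fin N) (Fin N) ℝ) := d ++ d.reverse with hc
  have hmapd : d.map (1 + ·) = l := by
    rw [hd, hl, List.map_ofFn]
    exact congrArg List.ofFn (funext fun i => by
      simp [Function.comp, sub_eq_add_neg])
  have hmapc : c.map (1 + ·) = l ++ l.reverse := by
    rw [hc, List.map_append, List.map_reverse, hmapd]
  have hsumd : d.sum = -(∑ i, α i • L i) := by
    rw [hd, List.sum_ofFn]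
    simp
  have hsumc : c.sum = -((2:ℝ) • ∑ i, α i • L i) := by
    rw [hc, List.sum_append, List.sum_reverse, hsumd, two_smul]
    abel
  have hexpr : l.reverse.prodᵀ * l.reverse.prod - 1 + (2:ℝ) • ∑ i, α i • L i
      = (c.map (1 + ·)).prod - 1 - c.sum := by
    rw [hmapc, List.prod_append, hPt, hsumc, sub_neg_eq_add]
  rw [hexpr]
  set φ := Matrix.toEuclideanCLM (𝕜 := ℝ) (n := Fin N) with hφ
  have hspec : specNorm ((c.map (1 + ·)).prod - 1 - c.sum)
      = ‖((c.map φ).map (1 + ·)).prod - 1 - (c.map φ).sum‖ := by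
    unfold specNorm
    congr 1
    rw [map_sub, map_sub, _root_.map_one, map_list_prod, map_list_sum,
      List.map_map, List.map_map]
    have hfun : (⇑φ ∘ fun x => 1 + x) = ((fun x => 1 + x) ∘ ⇑φ) := by
      funext x
      simp [Function.comp, map_add, _root_.map_one]
    rw [hfun]
  rw [hspec]
  have hK1 : (1:ℝ) ≤ K := by rw [hK]; exact le_max_left _ _
  have hbound : ∀ y ∈ (c.map φ), ‖y‖ ≤ abar * K := by
    intro y hy
    obtain ⟨x, hx, rfl⟩ := List.mem_map.mp hy
    have hx' : x ∈ d := by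
      rcases List.mem_append.mp (hc ▸ hx) with h | h
      · exact h
      · exact List.mem_reverse.mp h
    rw [hd, List.mem_ofFn] at hx'
    obtain ⟨i, rfl⟩ := hx'
    have hnφ : ‖φ (-(α i • L i))‖ = α i * specNorm (L i) := by
      have h1 : φ (α i • L i) = α i • φ (L i) := _root_.map_smul φ _ _
      rw [map_neg, norm_neg, h1]
      first
      | (rw [norm_smul, Real.norm_of_nonneg (hα0 i)]; rfl)
      | (rw [norm_smul (α i) (φ (L i)), Real.norm_of_nonneg (hα0 i)]; rfl)
      | (simp [norm_smul, abs_of_nonneg (hα0 i)]; rfl)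
    rw [hnφ]
    have hLK : specNorm (L i) ≤ K := by
      rw [hK]
      exact le_trans (le_ciSup (f := fun j => specNorm (L j)) (Set.Finite.bddAbove (Set.finite_range _)) i) (le_max_right _ _)
    have hnn : (0:ℝ) ≤ specNorm (L i) := norm_nonneg _
    exact mul_le_mul (hα1 i) hLK hnn habar0
  have hlen : (c.map φ).length = 2 * m := by
    simp [hc, hd, two_mul]
  have hfin := key abar K habar0 habar1 hK1 (c.map φ) hbound
  rw [hlen] at hfin
  refine le_trans hfin (le_of_eq ?_)
  push_cast
  ring
end
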